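/- For every integer k ≥ 2 and every a ∈ ℕ, the maximum m such that [a, m-1] ∈ kS₁ equals 2^k · a. Equivalently: [a, 2^k·a - 1] ∈ kS₁ but [a, 2^k·a] ∉ kS₁. -/

import Mathlib

open Finset

/-- `F < G` for finite sets: every element of `F` is below every element of `G`. -/
def FinsetLT (F G : Finset ℕ) : Prop := ∀ x ∈ F, ∀ y ∈ G, x < y

/-- Membership in the Schreier family `S₁`: a finite set of positive integers
with `|F| ≤ min F` (the empty set belongs trivially). -/
def IsSchreier (F : Finset ℕ) : Prop := ∀ n ∈ F, 0 < n ∧ F.card ≤ n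

/-- `F` is a union of at most `d` sets `F₁ < F₂ < ⋯`, each in the family `P`. -/
def Combine (P : Finset ℕ → Prop) (d : ℕ) (F : Finset ℕ) : Prop :=
  ∃ L : List (Finset ℕ), L.length ≤ d ∧ L.Pairwise FinsetLT ∧
    (∀ G ∈ L, P G) ∧ L.foldr (· ∪ ·) ∅ = F

/-- Membership in `S₂`. -/
def MemS2 (F : Finset ℕ) : Prop :=
  F = ∅ ∨ ∃ h : F.Nonempty, Combine IsSchreier (F.min' h) F

/-- Membership in `S₃`. -/
def MemS3 (F : Finset ℕ) : Prop :=
  F = ∅ ∨ ∃ h : F.Nonempty, Combine MemS2 (F.min' h) F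

/-- `F` is a maximal member of the family `P` (among sets of positive integers). -/
def IsFull (P : Finset ℕ → Prop) (F : Finset ℕ) : Prop :=
  P F ∧ ∀ n : ℕ, 0 < n → n ∉ F → ¬ P (insert n F)

/-- `F ∈ full_{a,b}(P)`. -/
def FullAB (P : Finset ℕ → Prop) (a b : ℕ) (F : Finset ℕ) : Prop :=
  P F ∧ F ⊆ Finset.Icc a b ∧ a ∈ F ∧
    ∀ n ∈ Finset.Icc a b, n ∉ F → ¬ P (insert n F)

/-- The tower function `τ`. -/
def tau : ℕ → ℕ → ℕ
  | 0, a => a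
  | i + 1, a => 2 ^ tau i a

/-- `E₁(F)`: `F` itself if `|F| ≤ min F`, otherwise the `min F` smallest elements of `F`. -/
def E1 (F : Finset ℕ) : Finset ℕ :=
  if h : F.Nonempty then ((F.sort (· ≤ ·)).take (F.min' h)).toFinset else ∅

/-- Union of the first `i` greedy pieces. -/
def Eacc : ℕ → Finset ℕ → Finset ℕ
  | 0, _ => ∅
  | i + 1, F => Eacc i F ∪ E1 (F \ Eacc i F)

/-- The `i`-th greedy piece `E_i(F)` (for `i ≥ 1`). -/
def Epiece (i : ℕ) (F : Finset ℕ) : Finset ℕ := E1 (F \ Eacc (i - 1) F)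

open Classical in
/-- `E₁*(F)`: `F` itself if `F ∈ S₂`, otherwise `E₁(F) ∪ ⋯ ∪ E_{min F}(F)`. -/
noncomputable def E1star (F : Finset ℕ) : Finset ℕ :=
  if MemS2 F then F
  else if h : F.Nonempty then Eacc (F.min' h) F else ∅

/-- Union of the first `i` starred greedy pieces. -/
noncomputable def EaccStar : ℕ → Finset ℕ → Finset ℕ
  | 0, _ => ∅
  | i + 1, F => EaccStar i F ∪ E1star (F \ EaccStar i F)

/-- The `i`-th starred greedy piece `E_i*(F)` (for `i ≥ 1`). -/
noncomputable def EpieceStar (i : ℕ) (F : Finset ℕ) : Finset ℕ :=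
  E1star (F \ EaccStar (i - 1) F)

lemma mem_foldr_union (L : List (Finset ℕ)) (x : ℕ) :
    x ∈ L.foldr (· ∪ ·) ∅ ↔ ∃ G ∈ L, x ∈ G := by
  induction L with
  | nil => simp
  | cons G T ih => simp [ih]

lemma pos_part : ∀ k a : ℕ, 0 < a → Combine IsSchreier k (Finset.Icc a (2 ^ k * a - 1)) := by
  intro k
  induction k with
  | zero =>
    intro a ha
    refine ⟨[], by simp, by simp, by simp, ?_⟩
    simp only [pow_zero, one_mul, List.foldr_nil]
    exact (Finset.Icc_eq_empty (by omega)).symm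
  | succ k ih =>
    intro a ha
    obtain ⟨L, hlen, hpw, hS, hU⟩ := ih (2 * a) (by omega)
    have h2 : 2 ^ k * (2 * a) = 2 ^ (k + 1) * a := by ring
    refine ⟨Finset.Icc a (2 * a - 1) :: L, by simpa using hlen, ?_, ?_, ?_⟩
    · refine List.pairwise_cons.mpr ⟨?_, hpw⟩
      intro H hH x hx y hy
      have hy' : y ∈ L.foldr (· ∪ ·) ∅ := (mem_foldr_union L y).mpr ⟨H, hH, hy⟩
      rw [hU] at hy'
      simp only [Finset.mem_Icc] at hx hy'
      omega
    · intro G hG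
      rcases List.mem_cons.mp hG with h | h
      · subst h
        intro n hn
        simp only [Finset.mem_Icc] at hn
        have : (Finset.Icc a (2 * a - 1)).card = a := by
          rw [Nat.card_Icc]; omega
        omega
      · exact hS G h
    · show Finset.Icc a (2 * a - 1) ∪ L.foldr (· ∪ ·) ∅ = _
      rw [hU, h2]
      ext x
      simp only [Finset.mem_union, Finset.mem_Icc]
      have : 2 * a ≤ 2 ^ (k + 1) * a := by
        have : 2 ≤ 2 ^ (k + 1) := by
          calc 2 = 2 ^ 1 := by norm_num
          _ ≤ 2 ^ (k + 1) := Nat.pow_le_pow_right (by norm_num) (by omega)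
        exact Nat.mul_le_mul_right a this
      omega

lemma neg_part : ∀ (L : List (Finset ℕ)) (k a b : ℕ), L.Pairwise FinsetLT →
    (∀ G ∈ L, IsSchreier G) → L.length ≤ k → 0 < a → a ≤ b →
    L.foldr (· ∪ ·) ∅ = Finset.Icc a b → b + 1 ≤ 2 ^ k * a := by
  intro L
  induction L with
  | nil =>
    intro k a b _ _ _ ha hab hU
    exfalso
    have : a ∈ Finset.Icc a b := Finset.mem_Icc.mpr ⟨le_refl a, hab⟩
    rw [← hU] at this
    simp at this
  | cons G T ih =>
    intro k a b hpw hS hlen ha hab hU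
    have hpw' := (List.pairwise_cons.mp hpw).2
    have hGT := (List.pairwise_cons.mp hpw).1
    have hS' : ∀ H ∈ T, IsSchreier H := fun H hH => hS H (List.mem_cons_of_mem G hH)
    have hk1 : 1 ≤ k := by simp at hlen; omega
    have hUc : G ∪ T.foldr (· ∪ ·) ∅ = Finset.Icc a b := hU
    rcases eq_or_ne G ∅ with hGe | hGne
    · subst hGe
      rw [Finset.empty_union] at hUc
      exact ih k a b hpw' hS' (by simp at hlen ⊢; omega) ha hab hUc
    · have hGne' : G.Nonempty := Finset.nonempty_iff_ne_empty.mpr hGne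
      -- a ∈ G
      have haG : a ∈ G := by
        have haU : a ∈ G ∪ T.foldr (· ∪ ·) ∅ := by
          rw [hUc]; exact Finset.mem_Icc.mpr ⟨le_refl a, hab⟩
        rcases Finset.mem_union.mp haU with h | h
        · exact h
        · exfalso
          obtain ⟨H, hH, haH⟩ := (mem_foldr_union T a).mp h
          obtain ⟨x, hx⟩ := hGne'
          have hxa : x < a := hGT H hH x hx a haH
          have : x ∈ Finset.Icc a b := by
            rw [← hUc]; exact Finset.mem_union_left _ hx
          simp only [Finset.mem_Icc] at this
          omega
      have hsub : G ⊆ Finset.Icc a b := by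
        intro x hx; rw [← hUc]; exact Finset.mem_union_left _ hx
      have hcard : G.card ≤ a := (hS G List.mem_cons_self a haG).2
      set M := G.max' hGne' with hM
      have hMG : M ∈ G := G.max'_mem hGne'
      have hMb : M ≤ b := (Finset.mem_Icc.mp (hsub hMG)).2
      have haM : a ≤ M := (Finset.mem_Icc.mp (hsub hMG)).1
      -- G = Icc a M
      have hGeq : G = Finset.Icc a M := by
        apply Finset.Subset.antisymm
        · intro x hx
          exact Finset.mem_Icc.mpr ⟨(Finset.mem_Icc.mp (hsub hx)).1, G.le_max' x hx⟩
        · intro x hx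
          simp only [Finset.mem_Icc] at hx
          by_contra hxG
          have hxU : x ∈ G ∪ T.foldr (· ∪ ·) ∅ := by
            rw [hUc]; exact Finset.mem_Icc.mpr ⟨hx.1, le_trans hx.2 hMb⟩
          rcases Finset.mem_union.mp hxU with h | h
          · exact hxG h
          · obtain ⟨H, hH, hxH⟩ := (mem_foldr_union T x).mp h
            have : M < x := hGT H hH M hMG x hxH
            omega
      have hcardM : M + 1 = a + G.card := by
        rw [hGeq, Nat.card_Icc]; omega
      have hMa : M + 1 ≤ 2 * a := by omega
      rcases le_or_gt b M with hbM | hMb'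
      · -- b ≤ M : done directly
        have h2 : 2 * a ≤ 2 ^ k * a := by
          have : 2 ≤ 2 ^ k := by
            calc 2 = 2 ^ 1 := by norm_num
            _ ≤ 2 ^ k := Nat.pow_le_pow_right (by norm_num) hk1
          exact Nat.mul_le_mul_right a this
        omega
      · -- M < b : tail union is Icc (M+1) b
        have hTU : T.foldr (· ∪ ·) ∅ = Finset.Icc (M + 1) b := by
          ext x
          rw [mem_foldr_union]
          constructor
          · rintro ⟨H, hH, hxH⟩
            have hxU : x ∈ Finset.Icc a b := by
              rw [← hUc]
              exact Finset.mem_union_right _ ((mem_foldr_union T x).mpr ⟨H, hH, hxH⟩)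
            have : M < x := hGT H hH M hMG x hxH
            simp only [Finset.mem_Icc] at hxU ⊢
            omega
          · intro hx
            simp only [Finset.mem_Icc] at hx
            have hxU : x ∈ G ∪ T.foldr (· ∪ ·) ∅ := by
              rw [hUc]; exact Finset.mem_Icc.mpr ⟨by omega, hx.2⟩
            rcases Finset.mem_union.mp hxU with h | h
            · exfalso
              have : x ≤ M := G.le_max' x h
              omega
            · exact (mem_foldr_union T x).mp h
        have hlen' : T.length ≤ k - 1 := by simp at hlen; omega
        have hib := ih (k - 1) (M + 1) b hpw' hS' hlen' (by omega) (by omega) hTU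
        have : 2 ^ (k - 1) * (M + 1) ≤ 2 ^ (k - 1) * (2 * a) := Nat.mul_le_mul_left _ hMa
        have h2k : 2 ^ (k - 1) * 2 = 2 ^ k := by
          rw [← pow_succ]; congr 1; omega
        calc b + 1 ≤ 2 ^ (k - 1) * (M + 1) := hib
        _ ≤ 2 ^ (k - 1) * (2 * a) := this
        _ = 2 ^ k * a := by rw [← mul_assoc, h2k]

theorem stmt1 (k : ℕ) (hk : 2 ≤ k) (a : ℕ) (ha : 0 < a) :
    Combine IsSchreier k (Finset.Icc a (2 ^ k * a - 1)) ∧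
    ¬ Combine IsSchreier k (Finset.Icc a (2 ^ k * a)) := by
  constructor
  · exact pos_part k a ha
  · rintro ⟨L, hlen, hpw, hS, hU⟩
    have hka : a ≤ 2 ^ k * a := Nat.le_mul_of_pos_left a (Nat.pow_pos (by norm_num))
    have := neg_part L k a (2 ^ k * a) hpw hS hlen ha hka hU
    omega
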